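/- Let $\mu, \nu$ be Borel probability measures on $\mathbb{R}$ with finite $p$-th moments for $p \geq 1$, with cumulative distribution functions $F_\mu, F_\nu$ and quantile functions (generalized inverses) $F_\mu^{-1}, F_\nu^{-1}$. Then the $p$-Wasserstein distance satisfies $W_p(\mu,\nu)^p = \int_0^1 |F_\mu^{-1}(q) - F_\nu^{-1}(q)|^p \, dq$. -/

import Mathlib

open MeasureTheory Set
open scoped ENNReal NNReal

/-- A coupling of two measures on `ℝ`: a measure on `ℝ × ℝ` with the given marginals. -/
def IsCoupling (γ : Measure (ℝ × ℝ)) (μ ν : Measure ℝ) : Prop :=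
  γ.map Prod.fst = μ ∧ γ.map Prod.snd = ν

/-- CDF of a measure on `ℝ`. -/
noncomputable def cdfOf (μ : Measure ℝ) (x : ℝ) : ℝ := (μ (Iic x)).toReal

/-- Generalized inverse (quantile function) of the CDF. -/
noncomputable def quantileOf (μ : Measure ℝ) (q : ℝ) : ℝ :=
  sInf {x : ℝ | q ≤ cdfOf μ x}

set_option linter.unusedSectionVars false

section Quantile
variable (μ : Measure ℝ) [IsProbabilityMeasure μ]

lemma cdf_eq (x : ℝ) : ENNReal.ofReal (cdfOf μ x) = μ (Iic x) :=
  ENNReal.ofReal_toReal (measure_ne_top μ _)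

lemma cdf_nonneg (x : ℝ) : 0 ≤ cdfOf μ x := ENNReal.toReal_nonneg

lemma cdf_le_one (x : ℝ) : cdfOf μ x ≤ 1 := by
  rw [cdfOf, show (1:ℝ) = (1:ℝ≥0∞).toReal by simp]
  exact ENNReal.toReal_mono ENNReal.one_ne_top (prob_le_one)

lemma cdf_mono : Monotone (cdfOf μ) := fun a b hab =>
  ENNReal.toReal_mono (measure_ne_top μ _) (measure_mono (Iic_subset_Iic.2 hab))

lemma tendsto_cdf_atTop : Filter.Tendsto (cdfOf μ) Filter.atTop (nhds 1) := by
  have h := tendsto_measure_Iic_atTop (μ := μ)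
  rw [measure_univ] at h
  have := (ENNReal.tendsto_toReal ENNReal.one_ne_top).comp h
  exact this

lemma exists_cdf_lt {q : ℝ} (hq : 0 < q) : ∃ x : ℝ, cdfOf μ x < q := by
  have hanti : Antitone fun n : ℕ => Iic (-(n:ℝ)) := fun m n hmn =>
    Iic_subset_Iic.2 (by exact_mod_cast neg_le_neg (Nat.cast_le.2 hmn))
  have hInter : (⋂ n : ℕ, Iic (-(n:ℝ))) = ∅ := by
    ext x; simp only [mem_iInter, mem_Iic, mem_empty_iff_false, iff_false, not_forall, not_le]
    obtain ⟨n, hn⟩ := exists_nat_gt (-x)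
    exact ⟨n, by linarith⟩
  have h := tendsto_measure_iInter_atTop (μ := μ)
    (fun n => measurableSet_Iic.nullMeasurableSet) hanti ⟨0, measure_ne_top μ _⟩
  rw [hInter, measure_empty] at h
  have := h.eventually (eventually_lt_nhds (show (0:ℝ≥0∞) < ENNReal.ofReal q from ENNReal.ofReal_pos.2 hq))
  rcases this.exists with ⟨n, hn⟩
  refine ⟨-(n:ℝ), ?_⟩
  have := ENNReal.toReal_strict_mono (by simp) hn
  rwa [ENNReal.toReal_ofReal hq.le] at this

variable {μ}

lemma quantile_set_nonempty {q : ℝ} (hq : q < 1) : {x : ℝ | q ≤ cdfOf μ x}.Nonempty := by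
  have := (tendsto_cdf_atTop μ).eventually (eventually_ge_nhds hq)
  rcases this.exists with ⟨x, hx⟩
  exact ⟨x, hx⟩

lemma quantile_set_bddBelow {q : ℝ} (hq : 0 < q) : BddBelow {x : ℝ | q ≤ cdfOf μ x} := by
  rcases exists_cdf_lt μ hq with ⟨x₀, hx₀⟩
  refine ⟨x₀, fun x hx => ?_⟩
  by_contra h
  push_neg at h
  exact absurd (le_trans hx (cdf_mono μ h.le)) (not_le.2 hx₀)

lemma le_cdf_quantile {q : ℝ} (hq0 : 0 < q) (hq1 : q < 1) :
    q ≤ cdfOf μ (quantileOf μ q) := by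
  set Q := quantileOf μ q with hQ
  have key : ∀ ε > 0, q ≤ cdfOf μ (Q + ε) := by
    intro ε hε
    obtain ⟨x, hxS, hxlt⟩ := exists_lt_of_csInf_lt (quantile_set_nonempty (μ := μ) hq1) (lt_add_of_pos_right _ hε)
    exact le_trans hxS (cdf_mono μ hxlt.le)
  -- right continuity of cdf at Q
  have h1 : Filter.Tendsto (fun n : ℕ => μ (Iic (Q + 1/(n+1)))) Filter.atTop (nhds (μ (Iic Q))) := by
    have hanti : Antitone fun n : ℕ => Iic (Q + 1/(n+1)) := by
      intro m n hmn
      apply Iic_subset_Iic.2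
      have : (1:ℝ)/(n+1) ≤ 1/(m+1) := by
        apply one_div_le_one_div_of_le (by positivity)
        exact_mod_cast add_le_add_left (Nat.cast_le.2 hmn) 1
      linarith
    have hInter : (⋂ n : ℕ, Iic (Q + 1/(n+1))) = Iic Q := by
      ext x; simp only [mem_iInter, mem_Iic]
      constructor
      · intro h
        by_contra hx
        push_neg at hx
        obtain ⟨n, hn⟩ := exists_nat_one_div_lt (sub_pos.2 hx)
        have := h n
        linarith
      · intro h n; have : (0:ℝ) < 1/(n+1) := by positivity
        linarith
    have := tendsto_measure_iInter_atTop (fun n => (measurableSet_Iic).nullMeasurableSet)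
      hanti ⟨0, measure_ne_top μ _⟩
    rwa [hInter] at this
  have h2 : ∀ n : ℕ, ENNReal.ofReal q ≤ μ (Iic (Q + 1/(n+1))) := by
    intro n
    rw [← cdf_eq μ]
    exact ENNReal.ofReal_le_ofReal (key _ (by positivity))
  have h3 : ENNReal.ofReal q ≤ μ (Iic Q) := ge_of_tendsto' h1 h2
  rw [← cdf_eq μ] at h3
  exact (ENNReal.ofReal_le_ofReal_iff (cdf_nonneg μ _)).1 h3

lemma quantile_le_iff {q x : ℝ} (hq0 : 0 < q) (hq1 : q < 1) :
    quantileOf μ q ≤ x ↔ q ≤ cdfOf μ x := by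
  constructor
  · intro h
    exact le_trans (le_cdf_quantile hq0 hq1) (cdf_mono μ h)
  · intro h
    exact csInf_le (quantile_set_bddBelow hq0) h

lemma lt_quantile_iff {q x : ℝ} (hq0 : 0 < q) (hq1 : q < 1) :
    x < quantileOf μ q ↔ cdfOf μ x < q := by
  rw [← not_le, ← not_le, quantile_le_iff hq0 hq1]

lemma quantile_monotoneOn : MonotoneOn (quantileOf μ) (Ioo (0:ℝ) 1) := by
  intro a ha b hb hab
  exact csInf_le_csInf (quantile_set_bddBelow ha.1)
    (quantile_set_nonempty hb.2)
    (fun x hx => le_trans hab hx)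

lemma quantile_aemeasurable :
    AEMeasurable (quantileOf μ) (volume.restrict (Ioo (0:ℝ) 1)) :=
  aemeasurable_restrict_of_monotoneOn measurableSet_Ioo quantile_monotoneOn

lemma map_quantile :
    Measure.map (quantileOf μ) (volume.restrict (Ioo (0:ℝ) 1)) = μ := by
  have hmeas : AEMeasurable (quantileOf μ) (volume.restrict (Ioo (0:ℝ) 1)) := quantile_aemeasurable
  have hfin : IsFiniteMeasure (Measure.map (quantileOf μ) (volume.restrict (Ioo (0:ℝ) 1))) := by
    constructor
    rw [Measure.map_apply_of_aemeasurable hmeas MeasurableSet.univ]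
    simp [Real.volume_Ioo]
  apply Measure.ext_of_Iic
  intro x
  rw [Measure.map_apply_of_aemeasurable hmeas measurableSet_Iic,
    Measure.restrict_apply' measurableSet_Ioo]
  have hset : quantileOf μ ⁻¹' Iic x ∩ Ioo 0 1 = {q : ℝ | q ≤ cdfOf μ x} ∩ Ioo 0 1 := by
    ext q
    simp only [mem_inter_iff, mem_preimage, mem_Iic, mem_Ioo, mem_setOf_eq]
    constructor
    · rintro ⟨h, hq⟩; exact ⟨(quantile_le_iff hq.1 hq.2).1 h, hq⟩
    · rintro ⟨h, hq⟩; exact ⟨(quantile_le_iff hq.1 hq.2).2 h, hq⟩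
  rw [hset]
  have h1 : {q : ℝ | q ≤ cdfOf μ x} ∩ Ioo 0 1 = Iic (cdfOf μ x) ∩ Ioo 0 1 := rfl
  rw [h1, ← cdf_eq μ x]
  set c := cdfOf μ x with hc
  have hc0 : 0 ≤ c := cdf_nonneg μ x
  have hc1 : c ≤ 1 := cdf_le_one μ x
  -- volume (Iic c ∩ Ioo 0 1) = ofReal c
  apply le_antisymm
  · have hsub : Iic c ∩ Ioo 0 1 ⊆ Ioc 0 c := by
      rintro q ⟨hqa, hqb⟩; exact ⟨hqb.1, hqa⟩
    calc volume (Iic c ∩ Ioo 0 1) ≤ volume (Ioc 0 c) := measure_mono hsub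
    _ = ENNReal.ofReal c := by rw [Real.volume_Ioc, sub_zero]
  · have hsub : Ioo 0 c ⊆ Iic c ∩ Ioo 0 1 := by
      rintro q ⟨hqa, hqb⟩; exact ⟨hqb.le, hqa, lt_of_lt_of_le hqb hc1⟩
    calc ENNReal.ofReal c = volume (Ioo 0 c) := by rw [Real.volume_Ioo, sub_zero]
    _ ≤ volume (Iic c ∩ Ioo 0 1) := measure_mono hsub

end Quantile

noncomputable def psi (p : ℝ) : ℝ → ℝ := fun t =>
  if t < 0 then -(p * (-t) ^ (p-1)) else p * t ^ (p-1)

variable {p : ℝ}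

lemma psi_nonneg_of (hp : 1 ≤ p) {t : ℝ} (ht : 0 ≤ t) : 0 ≤ psi p t := by
  rw [psi, if_neg (not_lt.2 ht)]
  have hp0 : (0:ℝ) ≤ p := by linarith
  exact mul_nonneg hp0 (Real.rpow_nonneg ht _)

lemma psi_nonpos_of (hp : 1 ≤ p) {t : ℝ} (ht : t < 0) : psi p t ≤ 0 := by
  rw [psi, if_pos ht]
  have hp0 : (0:ℝ) ≤ p := by linarith
  have : (0:ℝ) ≤ p * (-t) ^ (p-1) := mul_nonneg hp0 (Real.rpow_nonneg (by linarith) _)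
  linarith

lemma psi_mono (hp : 1 ≤ p) : Monotone (psi p) := by
  have hp0 : (0:ℝ) < p := lt_of_lt_of_le one_pos hp
  have hp1 : (0:ℝ) ≤ p - 1 := by linarith
  intro s t hst
  rcases lt_or_ge s 0 with hs | hs
  · rcases lt_or_ge t 0 with ht | ht
    · rw [psi, if_pos hs, psi, if_pos ht]
      have h1 : (-t) ^ (p-1) ≤ (-s) ^ (p-1) :=
        Real.rpow_le_rpow (by linarith) (by linarith) hp1
      nlinarith
    · exact le_trans (psi_nonpos_of hp hs) (psi_nonneg_of hp ht)
  · have ht : (0:ℝ) ≤ t := le_trans hs hst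
    rw [psi, if_neg (not_lt.2 hs), psi, if_neg (not_lt.2 ht)]
    have := Real.rpow_le_rpow hs hst hp1
    nlinarith

lemma continuous_rpow_const (hp : 1 ≤ p) : Continuous fun t : ℝ => t ^ (p-1) :=
  continuous_iff_continuousAt.2 fun x =>
    Real.continuousAt_rpow_const x (p-1) (Or.inr (by linarith))

lemma psi_rightContinuous (hp : 1 ≤ p) :
    ∀ x : ℝ, ContinuousWithinAt (psi p) (Ici x) x := by
  intro x
  rcases lt_or_ge x 0 with hx | hx
  · have hg : ContinuousAt (fun t : ℝ => -(p * (-t) ^ (p-1))) x := by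
      have h1 : ContinuousAt (fun t : ℝ => (-t) ^ (p-1)) x :=
        ((continuous_rpow_const hp).comp continuous_neg).continuousAt
      exact ((h1.const_mul p).neg)
    have heq : psi p =ᶠ[nhds x] fun t => -(p * (-t) ^ (p-1)) :=
      Filter.eventually_of_mem (Iio_mem_nhds hx) fun t ht => if_pos ht
    exact (hg.congr heq.symm).continuousWithinAt
  · have hg : ContinuousWithinAt (fun t : ℝ => p * t ^ (p-1)) (Ici x) x :=
      (continuous_const.mul (continuous_rpow_const hp)).continuousWithinAt
    apply hg.congr
    · intro t ht
      rw [psi, if_neg (not_lt.2 (le_trans hx ht))]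
    · rw [psi, if_neg (not_lt.2 hx)]

noncomputable def psiSt (p : ℝ) (hp : 1 ≤ p) : StieltjesFunction ℝ :=
  ⟨psi p, psi_mono hp, psi_rightContinuous hp⟩

lemma psiSt_measure_Ioc (hp : 1 ≤ p) (a b : ℝ) :
    (psiSt p hp).measure (Ioc a b) = ENNReal.ofReal (psi p b - psi p a) :=
  StieltjesFunction.measure_Ioc _ a b

-- FTC: ∫ s in a..b, psi p s = |b|^p - |a|^p
lemma psi_intervalIntegrable (hp : 1 ≤ p) (a b : ℝ) :
    IntervalIntegrable (psi p) volume a b :=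
  ((psi_mono hp).monotoneOn _).intervalIntegrable

lemma integral_psi_nonneg (hp : 1 ≤ p) {a b : ℝ} (ha : 0 ≤ a) (hab : a ≤ b) :
    ∫ s in a..b, psi p s = |b| ^ p - |a| ^ p := by
  have hb : (0:ℝ) ≤ b := le_trans ha hab
  have hderiv : ∀ x ∈ uIcc a b, HasDerivAt (fun t : ℝ => t ^ p) (p * x ^ (p-1)) x := by
    intro x hx
    exact Real.hasDerivAt_rpow_const (x := x) (p := p) (Or.inr hp)
  have hint : IntervalIntegrable (fun x => p * x ^ (p-1)) volume a b := by
    exact (continuous_const.mul (continuous_rpow_const hp)).intervalIntegrable _ _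
  have h := intervalIntegral.integral_eq_sub_of_hasDerivAt hderiv hint
  have hcongr : ∫ s in a..b, psi p s = ∫ s in a..b, p * s ^ (p-1) := by
    apply intervalIntegral.integral_congr
    intro s hs
    rw [uIcc_of_le hab] at hs
    rw [psi, if_neg (not_lt.2 (le_trans ha hs.1))]
  rw [hcongr, h, abs_of_nonneg hb, abs_of_nonneg ha]

lemma integral_psi_nonpos (hp : 1 ≤ p) {a b : ℝ} (hb : b ≤ 0) (hab : a ≤ b) :
    ∫ s in a..b, psi p s = |b| ^ p - |a| ^ p := by
  have ha : a ≤ 0 := le_trans hab hb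
  have hderiv : ∀ x ∈ uIcc a b, HasDerivAt (fun t : ℝ => (-t) ^ p) (-(p * (-x) ^ (p-1))) x := by
    intro x hx
    have h1 := Real.hasDerivAt_rpow_const (x := -x) (p := p) (Or.inr hp)
    have h2 : HasDerivAt (fun t : ℝ => -t) (-1) x := (hasDerivAt_id x).neg
    have := h1.comp x h2
    rw [show -(p * (-x) ^ (p-1)) = p * (-x) ^ (p - 1) * -1 by ring]
    exact this
  have hint : IntervalIntegrable (fun x : ℝ => -(p * (-x) ^ (p-1))) volume a b := by
    exact (continuous_const.mul ((continuous_rpow_const hp).comp continuous_neg)).neg.intervalIntegrable _ _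
  have h := intervalIntegral.integral_eq_sub_of_hasDerivAt hderiv hint
  have hcongr : ∫ s in a..b, psi p s = ∫ s in a..b, -(p * (-s) ^ (p-1)) := by
    apply intervalIntegral.integral_congr_ae
    rw [Filter.eventually_iff]
    have hsub : {s : ℝ | s ∈ Set.uIoc a b → psi p s = -(p * (-s) ^ (p-1))} ⊇ {0}ᶜ := by
      intro s hs hmem
      rw [uIoc_of_le hab] at hmem
      have hs0 : s < 0 := lt_of_le_of_ne (le_trans hmem.2 hb) (by simpa using hs)
      rw [psi, if_pos hs0]
    have hnull : ({0}ᶜ : Set ℝ) ∈ ae (volume : Measure ℝ) := by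
      rw [compl_mem_ae_iff]
      exact Real.volume_singleton
    exact Filter.mem_of_superset hnull hsub
  rw [hcongr, h, abs_of_nonpos hb, abs_of_nonpos ha]

lemma integral_psi_le (hp : 1 ≤ p) {a b : ℝ} (hab : a ≤ b) :
    ∫ s in a..b, psi p s = |b| ^ p - |a| ^ p := by
  have h0 : |(0:ℝ)| ^ p = 0 := by
    rw [abs_zero]; exact Real.zero_rpow (by linarith)
  rcases le_total b 0 with hb | hb
  · exact integral_psi_nonpos hp hb hab
  · rcases le_total 0 a with ha | ha
    · exact integral_psi_nonneg hp ha hab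
    · rw [← intervalIntegral.integral_add_adjacent_intervals
        (psi_intervalIntegrable hp a 0) (psi_intervalIntegrable hp 0 b),
        integral_psi_nonpos hp le_rfl ha, integral_psi_nonneg hp le_rfl hb, h0]
      ring

lemma integral_psi (hp : 1 ≤ p) (a b : ℝ) :
    ∫ s in a..b, psi p s = |b| ^ p - |a| ^ p := by
  rcases le_total a b with hab | hab
  · exact integral_psi_le hp hab
  · rw [intervalIntegral.integral_symm, integral_psi_le hp hab]
    ring

lemma integral_psi_sub (hp : 1 ≤ p) (a b y : ℝ) :
    ∫ s in a..b, psi p (s - y) = |b - y| ^ p - |a - y| ^ p := by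
  rw [intervalIntegral.integral_comp_sub_right (fun s => psi p s) y, integral_psi hp]

section Identity

-- abbreviations for φ
lemma phi_nonneg (p x : ℝ) : 0 ≤ |x| ^ p := Real.rpow_nonneg (abs_nonneg x) p

lemma abs_sub_le_max {x y : ℝ} (h : (0 ≤ x ∧ 0 ≤ y) ∨ (x ≤ 0 ∧ y ≤ 0)) :
    |x - y| ≤ max |x| |y| := by
  rcases h with ⟨hx, hy⟩ | ⟨hx, hy⟩
  · rcases le_total x y with h' | h'
    · rw [abs_of_nonpos (by linarith)]
      exact le_max_of_le_right (by rw [abs_of_nonneg hy]; linarith)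
    · rw [abs_of_nonneg (by linarith)]
      exact le_max_of_le_left (by rw [abs_of_nonneg hx]; linarith)
  · rcases le_total x y with h' | h'
    · rw [abs_of_nonpos (by linarith)]
      exact le_max_of_le_left (by rw [abs_of_nonpos hx]; linarith)
    · rw [abs_of_nonneg (by linarith)]
      exact le_max_of_le_right (by rw [abs_of_nonpos hy]; linarith)

-- subadditive bound when same sign
lemma phi_sub_le (hp : 1 ≤ p) {x y : ℝ} (h : (0 ≤ x ∧ 0 ≤ y) ∨ (x ≤ 0 ∧ y ≤ 0)) :
    |x - y| ^ p ≤ |x| ^ p + |y| ^ p := by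
  have h1 : |x - y| ^ p ≤ (max |x| |y|) ^ p :=
    Real.rpow_le_rpow (abs_nonneg _) (abs_sub_le_max h) (by linarith)
  rcases max_cases |x| |y| with ⟨heq, _⟩ | ⟨heq, _⟩ <;> rw [heq] at h1 <;>
    [linarith [phi_nonneg p y]; linarith [phi_nonneg p x]]

-- superadditive bound when opposite signs
lemma phi_sub_ge (hp : 1 ≤ p) {x y : ℝ} (h : (0 ≤ x ∧ y ≤ 0) ∨ (x ≤ 0 ∧ 0 ≤ y)) :
    |x| ^ p + |y| ^ p ≤ |x - y| ^ p := by
  have keyN : ∀ a b : ℝ≥0, ((a : ℝ) ^ p) + ((b : ℝ) ^ p) ≤ (((a : ℝ) + (b : ℝ))) ^ p := by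
    intro a b
    have h2 := NNReal.add_rpow_le_rpow_add a b hp
    have h3 := NNReal.coe_le_coe.2 h2
    rwa [NNReal.coe_add, NNReal.coe_rpow, NNReal.coe_rpow, NNReal.coe_rpow, NNReal.coe_add] at h3
  have key : ∀ a b : ℝ, 0 ≤ a → 0 ≤ b → a ^ p + b ^ p ≤ (a + b) ^ p := by
    intro a b ha hb
    have := keyN (Real.toNNReal a) (Real.toNNReal b)
    rwa [Real.coe_toNNReal a ha, Real.coe_toNNReal b hb] at this
  rcases h with ⟨hx, hy⟩ | ⟨hx, hy⟩
  · have := key |x| |y| (abs_nonneg x) (abs_nonneg y)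
    rw [abs_of_nonneg hx, abs_of_nonpos hy] at this ⊢
    have heq : x - y = x + -y := by ring
    rw [heq, abs_of_nonneg (by linarith)]
    linarith
  · have := key |x| |y| (abs_nonneg x) (abs_nonneg y)
    rw [abs_of_nonpos hx, abs_of_nonneg hy] at this ⊢
    rw [abs_of_nonpos (by linarith : x - y ≤ 0)]
    have heq : -(x - y) = -x + y := by ring
    rw [heq]
    linarith

def Ppred (x y s u : ℝ) : Prop :=
  (0 ≤ s ∧ s < x ∧ 0 ≤ s - u ∧ s - u < y) ∨ (s < 0 ∧ x ≤ s ∧ s - u < 0 ∧ y ≤ s - u)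

def Npred (x y s u : ℝ) : Prop :=
  (0 ≤ s ∧ s < x ∧ s - u < 0 ∧ y ≤ s - u) ∨ (s < 0 ∧ x ≤ s ∧ 0 ≤ s - u ∧ s - u < y)

def setP : Set ((ℝ × ℝ) × ℝ × ℝ) := {w | Ppred w.1.1 w.1.2 w.2.1 w.2.2}
def setN : Set ((ℝ × ℝ) × ℝ × ℝ) := {w | Npred w.1.1 w.1.2 w.2.1 w.2.2}

lemma measurableSet_setP : MeasurableSet setP := by
  have m1 : Measurable fun w : (ℝ × ℝ) × ℝ × ℝ => w.1.1 := measurable_fst.comp measurable_fst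
  have m2 : Measurable fun w : (ℝ × ℝ) × ℝ × ℝ => w.1.2 := measurable_snd.comp measurable_fst
  have m3 : Measurable fun w : (ℝ × ℝ) × ℝ × ℝ => w.2.1 := measurable_fst.comp measurable_snd
  have m4 : Measurable fun w : (ℝ × ℝ) × ℝ × ℝ => w.2.2 := measurable_snd.comp measurable_snd
  have heq : setP = (({w : (ℝ × ℝ) × ℝ × ℝ | 0 ≤ w.2.1} ∩ {w | w.2.1 < w.1.1}) ∩
      ({w | 0 ≤ w.2.1 - w.2.2} ∩ {w | w.2.1 - w.2.2 < w.1.2})) ∪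
      ((({w : (ℝ × ℝ) × ℝ × ℝ | w.2.1 < 0} ∩ {w | w.1.1 ≤ w.2.1}) ∩
      ({w | w.2.1 - w.2.2 < 0} ∩ {w | w.1.2 ≤ w.2.1 - w.2.2}))) := by
    ext w
    simp only [setP, Ppred, mem_setOf_eq, mem_union, mem_inter_iff]
    tauto
  rw [heq]
  exact (((measurableSet_le measurable_const m3).inter (measurableSet_lt m3 m1)).inter
    ((measurableSet_le measurable_const (m3.sub m4)).inter (measurableSet_lt (m3.sub m4) m2))).union
    (((measurableSet_lt m3 measurable_const).inter (measurableSet_le m1 m3)).inter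
    ((measurableSet_lt (m3.sub m4) measurable_const).inter (measurableSet_le m2 (m3.sub m4))))

lemma measurableSet_setN : MeasurableSet setN := by
  have m1 : Measurable fun w : (ℝ × ℝ) × ℝ × ℝ => w.1.1 := measurable_fst.comp measurable_fst
  have m2 : Measurable fun w : (ℝ × ℝ) × ℝ × ℝ => w.1.2 := measurable_snd.comp measurable_fst
  have m3 : Measurable fun w : (ℝ × ℝ) × ℝ × ℝ => w.2.1 := measurable_fst.comp measurable_snd
  have m4 : Measurable fun w : (ℝ × ℝ) × ℝ × ℝ => w.2.2 := measurable_snd.comp measurable_snd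
  have heq : setN = (({w : (ℝ × ℝ) × ℝ × ℝ | 0 ≤ w.2.1} ∩ {w | w.2.1 < w.1.1}) ∩
      ({w | w.2.1 - w.2.2 < 0} ∩ {w | w.1.2 ≤ w.2.1 - w.2.2})) ∪
      ((({w : (ℝ × ℝ) × ℝ × ℝ | w.2.1 < 0} ∩ {w | w.1.1 ≤ w.2.1}) ∩
      ({w | 0 ≤ w.2.1 - w.2.2} ∩ {w | w.2.1 - w.2.2 < w.1.2}))) := by
    ext w
    simp only [setN, Npred, mem_setOf_eq, mem_union, mem_inter_iff]
    tauto
  rw [heq]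
  exact (((measurableSet_le measurable_const m3).inter (measurableSet_lt m3 m1)).inter
    ((measurableSet_lt (m3.sub m4) measurable_const).inter (measurableSet_le m2 (m3.sub m4)))).union
    (((measurableSet_lt m3 measurable_const).inter (measurableSet_le m1 m3)).inter
    ((measurableSet_le measurable_const (m3.sub m4)).inter (measurableSet_lt (m3.sub m4) m2)))

noncomputable def rho (hp : 1 ≤ p) : Measure (ℝ × ℝ) := volume.prod (psiSt p hp).measure

instance (hp : 1 ≤ p) : SigmaFinite (psiSt p hp).measure := by infer_instance
instance (hp : 1 ≤ p) : SFinite (rho hp) := by unfold rho; infer_instance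

noncomputable def PP (hp : 1 ≤ p) (xy : ℝ × ℝ) : ℝ≥0∞ := rho hp (Prod.mk xy ⁻¹' setP)
noncomputable def NP (hp : 1 ≤ p) (xy : ℝ × ℝ) : ℝ≥0∞ := rho hp (Prod.mk xy ⁻¹' setN)

lemma measurable_psi_ofReal (hp : 1 ≤ p) (y : ℝ) :
    Measurable fun s => ENNReal.ofReal (psi p s - psi p (s - y)) :=
  ENNReal.measurable_ofReal.comp (((psi_mono hp).measurable).sub
    (((psi_mono hp).measurable).comp (measurable_id.sub measurable_const)))

lemma measurable_psi_ofReal' (hp : 1 ≤ p) (y : ℝ) :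
    Measurable fun s => ENNReal.ofReal (psi p (s - y) - psi p s) :=
  ENNReal.measurable_ofReal.comp ((((psi_mono hp).measurable).comp
    (measurable_id.sub measurable_const)).sub ((psi_mono hp).measurable))

lemma PP_eq (hp : 1 ≤ p) (x y : ℝ) :
    PP hp (x, y) = (∫⁻ s in Ico 0 x, ENNReal.ofReal (psi p s - psi p (s - y)))
      + ∫⁻ s in Ico x 0, ENNReal.ofReal (psi p (s - y) - psi p s) := by
  have hslice : MeasurableSet (Prod.mk (x, y) ⁻¹' setP) :=
    measurableSet_setP.preimage (measurable_prodMk_left)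
  rw [PP, rho, Measure.prod_apply hslice]
  have hpt : ∀ s : ℝ, (psiSt p hp).measure (Prod.mk s ⁻¹' (Prod.mk (x, y) ⁻¹' setP))
      = (Ico 0 x).indicator (fun s => ENNReal.ofReal (psi p s - psi p (s - y))) s
        + (Ico x 0).indicator (fun s => ENNReal.ofReal (psi p (s - y) - psi p s)) s := by
    intro s
    rcases lt_or_ge s 0 with hs | hs
    · rcases lt_or_ge s x with hsx | hsx
      · -- s < 0, s < x : neither (s ∈ Ico x 0 requires x ≤ s)
        have he : (Prod.mk s ⁻¹' (Prod.mk (x, y) ⁻¹' setP)) = ∅ := by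
          ext u; simp only [mem_preimage, mem_empty_iff_false, iff_false]
          intro hc
          rcases hc with ⟨h1, _⟩ | ⟨_, h2, _⟩ <;> [linarith; linarith]
        rw [he, measure_empty, indicator_of_notMem (by simp [hs.not_ge]),
          indicator_of_notMem (by simp; intro h; linarith), add_zero]
      · -- s < 0, x ≤ s : second disjunct active
        have he : (Prod.mk s ⁻¹' (Prod.mk (x, y) ⁻¹' setP)) = Ioc s (s - y) := by
          ext u
          simp only [mem_preimage, setP, Ppred, mem_setOf_eq, mem_Ioc]
          constructor
          · rintro (⟨h1, _⟩ | ⟨_, _, h3, h4⟩); · linarith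
            constructor <;> linarith
          · rintro ⟨h1, h2⟩
            exact Or.inr ⟨hs, hsx, by linarith, by linarith⟩
        rw [he, StieltjesFunction.measure_Ioc, indicator_of_notMem (by simp; intro h; linarith),
          indicator_of_mem (by exact ⟨hsx, hs⟩), zero_add]
        rfl
    · rcases lt_or_ge s x with hsx | hsx
      · -- 0 ≤ s < x : first disjunct
        have he : (Prod.mk s ⁻¹' (Prod.mk (x, y) ⁻¹' setP)) = Ioc (s - y) s := by
          ext u
          simp only [mem_preimage, setP, Ppred, mem_setOf_eq, mem_Ioc]
          constructor
          · rintro (⟨_, _, h3, h4⟩ | ⟨h1, _⟩); · constructor <;> linarith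
            linarith
          · rintro ⟨h1, h2⟩
            exact Or.inl ⟨hs, hsx, by linarith, by linarith⟩
        rw [he, StieltjesFunction.measure_Ioc, indicator_of_mem (by exact ⟨hs, hsx⟩),
          indicator_of_notMem (by simp; intro h; linarith), add_zero]
        rfl
      · -- 0 ≤ s, x ≤ s : neither
        have he : (Prod.mk s ⁻¹' (Prod.mk (x, y) ⁻¹' setP)) = ∅ := by
          ext u; simp only [mem_preimage, mem_empty_iff_false, iff_false]
          intro hc
          rcases hc with ⟨_, h2, _⟩ | ⟨h1, _⟩ <;> linarith
        rw [he, measure_empty, indicator_of_notMem (by simp; intro h; linarith),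
          indicator_of_notMem (by simp; intro h; linarith), add_zero]
  calc ∫⁻ s, (psiSt p hp).measure (Prod.mk s ⁻¹' (Prod.mk (x, y) ⁻¹' setP))
      = ∫⁻ s, ((Ico 0 x).indicator (fun s => ENNReal.ofReal (psi p s - psi p (s - y))) s
        + (Ico x 0).indicator (fun s => ENNReal.ofReal (psi p (s - y) - psi p s)) s) := by
        exact lintegral_congr hpt
    _ = _ := by
        rw [lintegral_add_left ((measurable_psi_ofReal hp y).indicator measurableSet_Ico),
          lintegral_indicator measurableSet_Ico, lintegral_indicator measurableSet_Ico]

lemma NP_eq (hp : 1 ≤ p) (x y : ℝ) :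
    NP hp (x, y) = (∫⁻ s in Ico 0 x, ENNReal.ofReal (psi p (s - y) - psi p s))
      + ∫⁻ s in Ico x 0, ENNReal.ofReal (psi p s - psi p (s - y)) := by
  have hslice : MeasurableSet (Prod.mk (x, y) ⁻¹' setN) :=
    measurableSet_setN.preimage (measurable_prodMk_left)
  rw [NP, rho, Measure.prod_apply hslice]
  have hpt : ∀ s : ℝ, (psiSt p hp).measure (Prod.mk s ⁻¹' (Prod.mk (x, y) ⁻¹' setN))
      = (Ico 0 x).indicator (fun s => ENNReal.ofReal (psi p (s - y) - psi p s)) s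
        + (Ico x 0).indicator (fun s => ENNReal.ofReal (psi p s - psi p (s - y))) s := by
    intro s
    rcases lt_or_ge s 0 with hs | hs
    · rcases lt_or_ge s x with hsx | hsx
      · have he : (Prod.mk s ⁻¹' (Prod.mk (x, y) ⁻¹' setN)) = ∅ := by
          ext u; simp only [mem_preimage, mem_empty_iff_false, iff_false]
          intro hc
          rcases hc with ⟨h1, _⟩ | ⟨_, h2, _⟩ <;> [linarith; linarith]
        rw [he, measure_empty, indicator_of_notMem (by simp [hs.not_ge]),
          indicator_of_notMem (by simp; intro h; linarith), add_zero]
      · have he : (Prod.mk s ⁻¹' (Prod.mk (x, y) ⁻¹' setN)) = Ioc (s - y) s := by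
          ext u
          simp only [mem_preimage, setN, Npred, mem_setOf_eq, mem_Ioc]
          constructor
          · rintro (⟨h1, _⟩ | ⟨_, _, h3, h4⟩); · linarith
            constructor <;> linarith
          · rintro ⟨h1, h2⟩
            exact Or.inr ⟨hs, hsx, by linarith, by linarith⟩
        rw [he, StieltjesFunction.measure_Ioc, indicator_of_notMem (by simp; intro h; linarith),
          indicator_of_mem (by exact ⟨hsx, hs⟩), zero_add]
        rfl
    · rcases lt_or_ge s x with hsx | hsx
      · have he : (Prod.mk s ⁻¹' (Prod.mk (x, y) ⁻¹' setN)) = Ioc s (s - y) := by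
          ext u
          simp only [mem_preimage, setN, Npred, mem_setOf_eq, mem_Ioc]
          constructor
          · rintro (⟨_, _, h3, h4⟩ | ⟨h1, _⟩); · constructor <;> linarith
            linarith
          · rintro ⟨h1, h2⟩
            exact Or.inl ⟨hs, hsx, by linarith, by linarith⟩
        rw [he, StieltjesFunction.measure_Ioc, indicator_of_mem (by exact ⟨hs, hsx⟩),
          indicator_of_notMem (by simp; intro h; linarith), add_zero]
        rfl
      · have he : (Prod.mk s ⁻¹' (Prod.mk (x, y) ⁻¹' setN)) = ∅ := by
          ext u; simp only [mem_preimage, mem_empty_iff_false, iff_false]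
          intro hc
          rcases hc with ⟨_, h2, _⟩ | ⟨h1, _⟩ <;> linarith
        rw [he, measure_empty, indicator_of_notMem (by simp; intro h; linarith),
          indicator_of_notMem (by simp; intro h; linarith), add_zero]
  calc ∫⁻ s, (psiSt p hp).measure (Prod.mk s ⁻¹' (Prod.mk (x, y) ⁻¹' setN))
      = ∫⁻ s, ((Ico 0 x).indicator (fun s => ENNReal.ofReal (psi p (s - y) - psi p s)) s
        + (Ico x 0).indicator (fun s => ENNReal.ofReal (psi p s - psi p (s - y))) s) := by
        exact lintegral_congr hpt
    _ = _ := by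
        rw [lintegral_add_left ((measurable_psi_ofReal' hp y).indicator measurableSet_Ico),
          lintegral_indicator measurableSet_Ico, lintegral_indicator measurableSet_Ico]

end Identity

section Quadrant
variable {p : ℝ}

lemma lint_ofReal_zero {f : ℝ → ℝ} {s : Set ℝ} (hs : MeasurableSet s)
    (h : ∀ x ∈ s, f x ≤ 0) : ∫⁻ x in s, ENNReal.ofReal (f x) = 0 := by
  rw [setLIntegral_congr_fun_ae (g := fun _ => (0:ℝ≥0∞)) hs
    (ae_of_all _ fun x hx => ENNReal.ofReal_eq_zero.2 (h x hx))]
  simp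

lemma lint_Ico_ofReal {a b : ℝ} (hab : a ≤ b) {f : ℝ → ℝ}
    (hfi : IntervalIntegrable f volume a b) (hnn : ∀ x ∈ Icc a b, 0 ≤ f x) :
    ∫⁻ x in Ico a b, ENNReal.ofReal (f x) = ENNReal.ofReal (∫ x in a..b, f x) := by
  rw [Measure.restrict_congr_set Ico_ae_eq_Ioc, intervalIntegral.integral_of_le hab,
    ofReal_integral_eq_lintegral_ofReal hfi.1
    ((ae_restrict_iff' measurableSet_Ioc).2 (ae_of_all _ fun x hx => hnn x ⟨hx.1.le, hx.2⟩))]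

lemma psi_shift_intervalIntegrable (hp : 1 ≤ p) (y a b : ℝ) :
    IntervalIntegrable (fun s => psi p (s - y)) volume a b :=
  (((psi_mono hp).comp (fun a b hab => sub_le_sub_right hab y : Monotone fun s => s - y)).monotoneOn _).intervalIntegrable

lemma psi_diff_integrable (hp : 1 ≤ p) (y a b : ℝ) :
    IntervalIntegrable (fun s => psi p s - psi p (s - y)) volume a b :=
  (psi_intervalIntegrable hp a b).sub (psi_shift_intervalIntegrable hp y a b)

lemma psi_diff_integrable' (hp : 1 ≤ p) (y a b : ℝ) :
    IntervalIntegrable (fun s => psi p (s - y) - psi p s) volume a b :=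
  (psi_shift_intervalIntegrable hp y a b).sub (psi_intervalIntegrable hp a b)

lemma integral_psi_diff (hp : 1 ≤ p) (a b y : ℝ) :
    ∫ s in a..b, (psi p s - psi p (s - y)) =
      (|b| ^ p - |a| ^ p) - (|b - y| ^ p - |a - y| ^ p) := by
  rw [intervalIntegral.integral_sub (psi_intervalIntegrable hp a b)
    (psi_shift_intervalIntegrable hp y a b), integral_psi hp, integral_psi_sub hp]

lemma integral_psi_diff' (hp : 1 ≤ p) (a b y : ℝ) :
    ∫ s in a..b, (psi p (s - y) - psi p s) =
      (|b - y| ^ p - |a - y| ^ p) - (|b| ^ p - |a| ^ p) := by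
  rw [intervalIntegral.integral_sub (psi_shift_intervalIntegrable hp y a b)
    (psi_intervalIntegrable hp a b), integral_psi hp, integral_psi_sub hp]

lemma abs_zero_rpow (hp : 1 ≤ p) : |(0:ℝ)| ^ p = 0 := by
  rw [abs_zero]; exact Real.zero_rpow (by linarith)

theorem quadrant_eval (hp : 1 ≤ p) (x y : ℝ) :
    (PP hp (x, y) = ENNReal.ofReal (|x| ^ p + |y| ^ p - |x - y| ^ p) ∧ NP hp (x, y) = 0
      ∧ |x - y| ^ p ≤ |x| ^ p + |y| ^ p) ∨
    (PP hp (x, y) = 0 ∧ NP hp (x, y) = ENNReal.ofReal (|x - y| ^ p - (|x| ^ p + |y| ^ p))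
      ∧ |x| ^ p + |y| ^ p ≤ |x - y| ^ p) := by
  have h0 := abs_zero_rpow hp
  rcases le_total 0 x with hx | hx <;> rcases le_total 0 y with hy | hy
  · -- 0 ≤ x, 0 ≤ y
    left
    have hIco : Ico x 0 = ∅ := Ico_eq_empty (by simp; linarith)
    have hnn : ∀ s, 0 ≤ psi p s - psi p (s - y) :=
      fun s => sub_nonneg.2 (psi_mono hp (by linarith))
    refine ⟨?_, ?_, phi_sub_le hp (Or.inl ⟨hx, hy⟩)⟩
    · rw [PP_eq hp x y, hIco]
      rw [lint_Ico_ofReal hx (psi_diff_integrable hp y 0 x) (fun s _ => hnn s),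
        integral_psi_diff hp 0 x y]
      simp only [Measure.restrict_empty, lintegral_zero_measure, add_zero]
      congr 1
      simp only [h0, zero_sub, abs_neg]
      ring
    · rw [NP_eq hp x y, hIco]
      rw [lint_ofReal_zero measurableSet_Ico (fun s _ => by linarith [hnn s])]
      simp
  · -- 0 ≤ x, y ≤ 0
    right
    have hIco : Ico x 0 = ∅ := Ico_eq_empty (by simp; linarith)
    have hnn : ∀ s, 0 ≤ psi p (s - y) - psi p s :=
      fun s => sub_nonneg.2 (psi_mono hp (by linarith))
    refine ⟨?_, ?_, phi_sub_ge hp (Or.inl ⟨hx, hy⟩)⟩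
    · rw [PP_eq hp x y, hIco]
      rw [lint_ofReal_zero measurableSet_Ico (fun s _ => by linarith [hnn s])]
      simp
    · rw [NP_eq hp x y, hIco]
      rw [lint_Ico_ofReal hx (psi_diff_integrable' hp y 0 x) (fun s _ => hnn s),
        integral_psi_diff' hp 0 x y]
      simp only [Measure.restrict_empty, lintegral_zero_measure, add_zero]
      congr 1
      simp only [h0, zero_sub, abs_neg]
      ring
  · -- x ≤ 0, 0 ≤ y
    right
    have hIco : Ico 0 x = ∅ := Ico_eq_empty (by simp; linarith)
    have hnn : ∀ s, 0 ≤ psi p s - psi p (s - y) :=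
      fun s => sub_nonneg.2 (psi_mono hp (by linarith))
    refine ⟨?_, ?_, phi_sub_ge hp (Or.inr ⟨hx, hy⟩)⟩
    · rw [PP_eq hp x y, hIco]
      rw [lint_ofReal_zero measurableSet_Ico (fun s _ => by linarith [hnn s])]
      simp
    · rw [NP_eq hp x y, hIco]
      rw [lint_Ico_ofReal hx (psi_diff_integrable hp y x 0) (fun s _ => hnn s),
        integral_psi_diff hp x 0 y]
      simp only [Measure.restrict_empty, lintegral_zero_measure, zero_add]
      congr 1
      simp only [h0, zero_sub, abs_neg]
      ring
  · -- x ≤ 0, y ≤ 0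
    left
    have hIco : Ico 0 x = ∅ := Ico_eq_empty (by simp; linarith)
    have hnn : ∀ s, 0 ≤ psi p (s - y) - psi p s :=
      fun s => sub_nonneg.2 (psi_mono hp (by linarith))
    refine ⟨?_, ?_, phi_sub_le hp (Or.inr ⟨hx, hy⟩)⟩
    · rw [PP_eq hp x y, hIco]
      rw [lint_Ico_ofReal hx (psi_diff_integrable' hp y x 0) (fun s _ => hnn s),
        integral_psi_diff' hp x 0 y]
      simp only [Measure.restrict_empty, lintegral_zero_measure, zero_add]
      congr 1
      simp only [h0, zero_sub, abs_neg]
      ring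
    · rw [NP_eq hp x y, hIco]
      rw [lint_ofReal_zero measurableSet_Ico (fun s _ => by linarith [hnn s])]
      simp

theorem key_identity (hp : 1 ≤ p) (x y : ℝ) :
    ENNReal.ofReal (|x - y| ^ p) + PP hp (x, y)
      = ENNReal.ofReal (|x| ^ p) + ENNReal.ofReal (|y| ^ p) + NP hp (x, y) := by
  rcases quadrant_eval hp x y with ⟨hP, hN, hle⟩ | ⟨hP, hN, hle⟩
  · rw [hP, hN, add_zero, ← ENNReal.ofReal_add (phi_nonneg p _) (by linarith),
      ← ENNReal.ofReal_add (phi_nonneg p x) (phi_nonneg p y)]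
    congr 1
    ring
  · rw [hP, hN, add_zero, ← ENNReal.ofReal_add (phi_nonneg p x) (phi_nonneg p y),
      ← ENNReal.ofReal_add (by positivity : (0:ℝ) ≤ |x| ^ p + |y| ^ p) (by linarith)]
    congr 1
    ring

theorem PP_le (hp : 1 ≤ p) (x y : ℝ) :
    PP hp (x, y) ≤ ENNReal.ofReal (|x| ^ p) + ENNReal.ofReal (|y| ^ p) := by
  rcases quadrant_eval hp x y with ⟨hP, _, _⟩ | ⟨hP, _, _⟩
  · rw [hP, ← ENNReal.ofReal_add (phi_nonneg p x) (phi_nonneg p y)]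
    exact ENNReal.ofReal_le_ofReal (by linarith [phi_nonneg p (x - y)])
  · rw [hP]; exact zero_le

end Quadrant

section Coupling
variable {p : ℝ}

lemma IsCoupling.isProb {γ : Measure (ℝ × ℝ)} {μ ν : Measure ℝ} [IsProbabilityMeasure μ]
    (h : IsCoupling γ μ ν) : IsProbabilityMeasure γ := by
  constructor
  have := h.1
  rw [← measure_univ (μ := μ), ← this, Measure.map_apply measurable_fst MeasurableSet.univ]
  rfl

lemma coupling_fst {γ : Measure (ℝ × ℝ)} {μ ν : Measure ℝ} (h : IsCoupling γ μ ν)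
    (s : Set ℝ) (hs : MeasurableSet s) : γ (s ×ˢ univ) = μ s := by
  rw [← h.1, Measure.map_apply measurable_fst hs]
  congr 1
  ext z; simp [Set.prod]

lemma coupling_snd {γ : Measure (ℝ × ℝ)} {μ ν : Measure ℝ} (h : IsCoupling γ μ ν)
    (s : Set ℝ) (hs : MeasurableSet s) : γ (univ ×ˢ s) = ν s := by
  rw [← h.2, Measure.map_apply measurable_snd hs]
  congr 1
  ext z; simp [Set.prod]

-- rectangle splitting lemmas
lemma rect_split_fst {γ : Measure (ℝ × ℝ)} {μ ν : Measure ℝ} (h : IsCoupling γ μ ν) (s t : ℝ) :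
    γ (Ioi s ×ˢ Ioi t) + γ (Ioi s ×ˢ Iic t) = μ (Ioi s) := by
  rw [← coupling_fst h (Ioi s) measurableSet_Ioi, ← measure_union _
    (measurableSet_Ioi.prod measurableSet_Iic)]
  · congr 1
    ext z
    simp only [mem_union, mem_prod, mem_Ioi, mem_Iic, mem_univ, and_true]
    constructor
    · rintro (⟨h1, _⟩ | ⟨h1, _⟩) <;> exact h1
    · intro h1
      rcases le_or_gt z.2 t with h2 | h2
      · exact Or.inr ⟨h1, h2⟩
      · exact Or.inl ⟨h1, h2⟩
  · exact (by
      apply Set.disjoint_left.2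
      rintro z ⟨_, h1⟩ ⟨_, h2⟩
      exact absurd (mem_Ioi.1 h1) (not_lt.2 (mem_Iic.1 h2)))

lemma rect_split_snd {γ : Measure (ℝ × ℝ)} {μ ν : Measure ℝ} (h : IsCoupling γ μ ν) (s t : ℝ) :
    γ (Iic s ×ˢ Ioi t) + γ (Ioi s ×ˢ Ioi t) = ν (Ioi t) := by
  rw [← coupling_snd h (Ioi t) measurableSet_Ioi, ← measure_union _
    (measurableSet_Ioi.prod measurableSet_Ioi)]
  · congr 1
    ext z
    simp only [mem_union, mem_prod, mem_Ioi, mem_Iic, mem_univ, true_and]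
    constructor
    · rintro (⟨_, h1⟩ | ⟨_, h1⟩) <;> exact h1
    · intro h1
      rcases le_or_gt z.1 s with h2 | h2
      · exact Or.inl ⟨h2, h1⟩
      · exact Or.inr ⟨h2, h1⟩
  · exact (by
      apply Set.disjoint_left.2
      rintro z ⟨h1, _⟩ ⟨h2, _⟩
      exact absurd (mem_Ioi.1 h2) (not_lt.2 (mem_Iic.1 h1)))

lemma rect_split_iic {γ : Measure (ℝ × ℝ)} {μ ν : Measure ℝ} (h : IsCoupling γ μ ν) (s t : ℝ) :
    γ (Iic s ×ˢ Iic t) + γ (Ioi s ×ˢ Iic t) = ν (Iic t) := by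
  rw [← coupling_snd h (Iic t) measurableSet_Iic, ← measure_union _
    (measurableSet_Ioi.prod measurableSet_Iic)]
  · congr 1
    ext z
    simp only [mem_union, mem_prod, mem_Ioi, mem_Iic, mem_univ, true_and]
    constructor
    · rintro (⟨_, h1⟩ | ⟨_, h1⟩) <;> exact h1
    · intro h1
      rcases le_or_gt z.1 s with h2 | h2
      · exact Or.inl ⟨h2, h1⟩
      · exact Or.inr ⟨h2, h1⟩
  · exact (by
      apply Set.disjoint_left.2
      rintro z ⟨h1, _⟩ ⟨h2, _⟩
      exact absurd (mem_Ioi.1 h2) (not_lt.2 (mem_Iic.1 h1)))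

-- comparisons given dominance of upper-right probabilities
section Compare
variable {γ γ' : Measure (ℝ × ℝ)} {μ ν : Measure ℝ} [IsProbabilityMeasure μ] [IsProbabilityMeasure ν]

lemma compare_iic (h : IsCoupling γ μ ν) (h' : IsCoupling γ' μ ν)
    (hG : ∀ s t : ℝ, γ (Ioi s ×ˢ Ioi t) ≤ γ' (Ioi s ×ˢ Ioi t)) (s t : ℝ) :
    γ (Iic s ×ˢ Iic t) ≤ γ' (Iic s ×ˢ Iic t) := by
  have hγ : IsProbabilityMeasure γ := h.isProb
  have hγ' : IsProbabilityMeasure γ' := h'.isProb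
  have e1 := rect_split_iic h s t
  have e2 := rect_split_iic h' s t
  have f1 := rect_split_fst h s t
  have f2 := rect_split_fst h' s t
  -- B + C1 = ν Iic t ; G + C1 = μ Ioi s
  have key : γ (Iic s ×ˢ Iic t) + μ (Ioi s) = ν (Iic t) + γ (Ioi s ×ˢ Ioi t) := by
    rw [← e1, ← f1]; ring
  have key' : γ' (Iic s ×ˢ Iic t) + μ (Ioi s) = ν (Iic t) + γ' (Ioi s ×ˢ Ioi t) := by
    rw [← e2, ← f2]; ring
  have hle : γ (Iic s ×ˢ Iic t) + μ (Ioi s) ≤ γ' (Iic s ×ˢ Iic t) + μ (Ioi s) := by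
    rw [key, key']
    exact add_le_add_right (hG s t) _
  exact ENNReal.le_of_add_le_add_right (measure_ne_top μ _) hle

lemma compare_mixed_fst (h : IsCoupling γ μ ν) (h' : IsCoupling γ' μ ν)
    (hG : ∀ s t : ℝ, γ (Ioi s ×ˢ Ioi t) ≤ γ' (Ioi s ×ˢ Ioi t)) (s t : ℝ) :
    γ' (Ioi s ×ˢ Iic t) ≤ γ (Ioi s ×ˢ Iic t) := by
  have hγ : IsProbabilityMeasure γ := h.isProb
  have hγ' : IsProbabilityMeasure γ' := h'.isProb
  have f1 := rect_split_fst h s t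
  have f2 := rect_split_fst h' s t
  have hle : γ' (Ioi s ×ˢ Iic t) + γ' (Ioi s ×ˢ Ioi t) ≤ γ (Ioi s ×ˢ Iic t) + γ' (Ioi s ×ˢ Ioi t) := by
    calc γ' (Ioi s ×ˢ Iic t) + γ' (Ioi s ×ˢ Ioi t) = μ (Ioi s) := by rw [← f2]; ring
    _ = γ (Ioi s ×ˢ Iic t) + γ (Ioi s ×ˢ Ioi t) := by rw [← f1]; ring
    _ ≤ γ (Ioi s ×ˢ Iic t) + γ' (Ioi s ×ˢ Ioi t) := add_le_add_right (hG s t) _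
  exact ENNReal.le_of_add_le_add_right (measure_ne_top γ' _) hle

lemma compare_mixed_snd (h : IsCoupling γ μ ν) (h' : IsCoupling γ' μ ν)
    (hG : ∀ s t : ℝ, γ (Ioi s ×ˢ Ioi t) ≤ γ' (Ioi s ×ˢ Ioi t)) (s t : ℝ) :
    γ' (Iic s ×ˢ Ioi t) ≤ γ (Iic s ×ˢ Ioi t) := by
  have hγ : IsProbabilityMeasure γ := h.isProb
  have hγ' : IsProbabilityMeasure γ' := h'.isProb
  have f1 := rect_split_snd h s t
  have f2 := rect_split_snd h' s t
  have hle : γ' (Iic s ×ˢ Ioi t) + γ' (Ioi s ×ˢ Ioi t) ≤ γ (Iic s ×ˢ Ioi t) + γ' (Ioi s ×ˢ Ioi t) := by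
    calc γ' (Iic s ×ˢ Ioi t) + γ' (Ioi s ×ˢ Ioi t) = ν (Ioi t) := f2
    _ = γ (Iic s ×ˢ Ioi t) + γ (Ioi s ×ˢ Ioi t) := f1.symm
    _ ≤ γ (Iic s ×ˢ Ioi t) + γ' (Ioi s ×ˢ Ioi t) := add_le_add_right (hG s t) _
  exact ENNReal.le_of_add_le_add_right (measure_ne_top γ' _) hle

end Compare

-- slice description of setP/setN in the (x,y) variables
lemma setP_slice (γ : Measure (ℝ × ℝ)) (s u : ℝ) :
    γ ((fun xy : ℝ × ℝ => (xy, (s, u))) ⁻¹' setP)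
      = if 0 ≤ s then (if 0 ≤ s - u then γ (Ioi s ×ˢ Ioi (s - u)) else 0)
        else (if s - u < 0 then γ (Iic s ×ˢ Iic (s - u)) else 0) := by
  by_cases hs : 0 ≤ s
  · by_cases ht : 0 ≤ s - u
    · rw [if_pos hs, if_pos ht]
      congr 1
      ext xy
      simp only [mem_preimage, setP, Ppred, mem_setOf_eq, mem_prod, mem_Ioi]
      constructor
      · rintro (⟨_, h2, _, h4⟩ | ⟨h1, _⟩); · exact ⟨h2, h4⟩
        linarith
      · rintro ⟨h1, h2⟩
        exact Or.inl ⟨hs, h1, ht, h2⟩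
    · rw [if_pos hs, if_neg ht]
      convert measure_empty (μ := γ)
      ext xy
      simp only [mem_preimage, setP, Ppred, mem_setOf_eq, mem_empty_iff_false, iff_false]
      rintro (⟨_, _, h3, _⟩ | ⟨h1, _⟩) <;> [exact ht h3; linarith]
  · by_cases ht : s - u < 0
    · rw [if_neg hs, if_pos ht]
      congr 1
      ext xy
      simp only [mem_preimage, setP, Ppred, mem_setOf_eq, mem_prod, mem_Iic]
      constructor
      · rintro (⟨h1, _⟩ | ⟨_, h2, _, h4⟩); · linarith
        exact ⟨h2, h4⟩
      · rintro ⟨h1, h2⟩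
        exact Or.inr ⟨not_le.1 hs, h1, ht, h2⟩
    · rw [if_neg hs, if_neg ht]
      convert measure_empty (μ := γ)
      ext xy
      simp only [mem_preimage, setP, Ppred, mem_setOf_eq, mem_empty_iff_false, iff_false]
      rintro (⟨h1, _⟩ | ⟨_, _, h3, _⟩) <;> [linarith; exact ht h3]

lemma setN_slice (γ : Measure (ℝ × ℝ)) (s u : ℝ) :
    γ ((fun xy : ℝ × ℝ => (xy, (s, u))) ⁻¹' setN)
      = if 0 ≤ s then (if s - u < 0 then γ (Ioi s ×ˢ Iic (s - u)) else 0)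
        else (if 0 ≤ s - u then γ (Iic s ×ˢ Ioi (s - u)) else 0) := by
  by_cases hs : 0 ≤ s
  · by_cases ht : s - u < 0
    · rw [if_pos hs, if_pos ht]
      congr 1
      ext xy
      simp only [mem_preimage, setN, Npred, mem_setOf_eq, mem_prod, mem_Ioi, mem_Iic]
      constructor
      · rintro (⟨_, h2, _, h4⟩ | ⟨h1, _⟩); · exact ⟨h2, h4⟩
        linarith
      · rintro ⟨h1, h2⟩
        exact Or.inl ⟨hs, h1, ht, h2⟩
    · rw [if_pos hs, if_neg ht]
      convert measure_empty (μ := γ)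
      ext xy
      simp only [mem_preimage, setN, Npred, mem_setOf_eq, mem_empty_iff_false, iff_false]
      rintro (⟨_, _, h3, _⟩ | ⟨h1, _⟩) <;> [exact ht h3; linarith]
  · by_cases ht : 0 ≤ s - u
    · rw [if_neg hs, if_pos ht]
      congr 1
      ext xy
      simp only [mem_preimage, setN, Npred, mem_setOf_eq, mem_prod, mem_Ioi, mem_Iic]
      constructor
      · rintro (⟨h1, _⟩ | ⟨_, h2, _, h4⟩); · linarith
        exact ⟨h2, h4⟩
      · rintro ⟨h1, h2⟩
        exact Or.inr ⟨not_le.1 hs, h1, ht, h2⟩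
    · rw [if_neg hs, if_neg ht]
      convert measure_empty (μ := γ)
      ext xy
      simp only [mem_preimage, setN, Npred, mem_setOf_eq, mem_empty_iff_false, iff_false]
      rintro (⟨h1, _⟩ | ⟨_, _, h3, _⟩) <;> [linarith; exact ht h3]

end Coupling

section MainIneq
variable {p : ℝ}

lemma measurable_phi (hp : 1 ≤ p) :
    Measurable fun t : ℝ => ENNReal.ofReal (|t| ^ p) := by
  apply ENNReal.measurable_ofReal.comp
  have h1 : Continuous fun t : ℝ => t ^ p :=
    continuous_iff_continuousAt.2 fun x =>
      Real.continuousAt_rpow_const x p (Or.inr (by linarith))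
  exact (h1.comp continuous_abs).measurable

lemma measurable_cost (hp : 1 ≤ p) :
    Measurable fun z : ℝ × ℝ => ENNReal.ofReal (|z.1 - z.2| ^ p) := by
  apply ENNReal.measurable_ofReal.comp
  have h1 : Continuous fun t : ℝ => t ^ p :=
    continuous_iff_continuousAt.2 fun x =>
      Real.continuousAt_rpow_const x p (Or.inr (by linarith))
  exact (h1.comp ((continuous_fst.sub continuous_snd).abs)).measurable

lemma measurable_PP (hp : 1 ≤ p) : Measurable (PP hp) :=
  measurable_measure_prodMk_left measurableSet_setP

lemma measurable_NP (hp : 1 ≤ p) : Measurable (NP hp) :=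
  measurable_measure_prodMk_left measurableSet_setN

lemma marginal_fst {γ : Measure (ℝ × ℝ)} {μ ν : Measure ℝ} (h : IsCoupling γ μ ν) (hp : 1 ≤ p) :
    ∫⁻ z : ℝ × ℝ, ENNReal.ofReal (|z.1| ^ p) ∂γ = ∫⁻ x, ENNReal.ofReal (|x| ^ p) ∂μ := by
  rw [← h.1, lintegral_map (measurable_phi hp) measurable_fst]

lemma marginal_snd {γ : Measure (ℝ × ℝ)} {μ ν : Measure ℝ} (h : IsCoupling γ μ ν) (hp : 1 ≤ p) :
    ∫⁻ z : ℝ × ℝ, ENNReal.ofReal (|z.2| ^ p) ∂γ = ∫⁻ x, ENNReal.ofReal (|x| ^ p) ∂ν := by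
  rw [← h.2, lintegral_map (measurable_phi hp) measurable_snd]

theorem integrated_identity (hp : 1 ≤ p) {γ : Measure (ℝ × ℝ)} {μ ν : Measure ℝ}
    [IsProbabilityMeasure μ] [IsProbabilityMeasure ν] (h : IsCoupling γ μ ν) :
    (∫⁻ z : ℝ × ℝ, ENNReal.ofReal (|z.1 - z.2| ^ p) ∂γ)
        + ∫⁻ su, γ ((fun xy : ℝ × ℝ => (xy, su)) ⁻¹' setP) ∂(rho hp)
      = ((∫⁻ x, ENNReal.ofReal (|x| ^ p) ∂μ) + ∫⁻ x, ENNReal.ofReal (|x| ^ p) ∂ν)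
        + ∫⁻ su, γ ((fun xy : ℝ × ℝ => (xy, su)) ⁻¹' setN) ∂(rho hp) := by
  have hγ : IsProbabilityMeasure γ := h.isProb
  have hPP : ∫⁻ xy, PP hp xy ∂γ = ∫⁻ su, γ ((fun xy : ℝ × ℝ => (xy, su)) ⁻¹' setP) ∂(rho hp) := by
    rw [show ∫⁻ xy, PP hp xy ∂γ = (γ.prod (rho hp)) setP from
      (Measure.prod_apply measurableSet_setP).symm,
      Measure.prod_apply_symm measurableSet_setP]
  have hNP : ∫⁻ xy, NP hp xy ∂γ = ∫⁻ su, γ ((fun xy : ℝ × ℝ => (xy, su)) ⁻¹' setN) ∂(rho hp) := by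
    rw [show ∫⁻ xy, NP hp xy ∂γ = (γ.prod (rho hp)) setN from
      (Measure.prod_apply measurableSet_setN).symm,
      Measure.prod_apply_symm measurableSet_setN]
  have hid : ∫⁻ z : ℝ × ℝ, (ENNReal.ofReal (|z.1 - z.2| ^ p) + PP hp z) ∂γ
      = ∫⁻ z : ℝ × ℝ, ((ENNReal.ofReal (|z.1| ^ p) + ENNReal.ofReal (|z.2| ^ p)) + NP hp z) ∂γ := by
    apply lintegral_congr
    intro z
    exact key_identity hp z.1 z.2
  rw [lintegral_add_left (measurable_cost hp), lintegral_add_left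
      (by exact (by exact (measurable_phi hp).comp measurable_fst : Measurable fun z : ℝ × ℝ => ENNReal.ofReal (|z.1| ^ p)).add (by exact (measurable_phi hp).comp measurable_snd : Measurable fun z : ℝ × ℝ => ENNReal.ofReal (|z.2| ^ p)) : Measurable fun z : ℝ × ℝ => ENNReal.ofReal (|z.1| ^ p) + ENNReal.ofReal (|z.2| ^ p)),
    lintegral_add_left (by exact (measurable_phi hp).comp measurable_fst : Measurable fun z : ℝ × ℝ => ENNReal.ofReal (|z.1| ^ p))] at hid
  rw [hPP, hNP] at hid
  rw [hid]
  congr 2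
  · exact marginal_fst h hp
  · exact marginal_snd h hp

theorem PPint_le (hp : 1 ≤ p) {γ : Measure (ℝ × ℝ)} {μ ν : Measure ℝ}
    [IsProbabilityMeasure μ] [IsProbabilityMeasure ν] (h : IsCoupling γ μ ν) :
    ∫⁻ su, γ ((fun xy : ℝ × ℝ => (xy, su)) ⁻¹' setP) ∂(rho hp)
      ≤ (∫⁻ x, ENNReal.ofReal (|x| ^ p) ∂μ) + ∫⁻ x, ENNReal.ofReal (|x| ^ p) ∂ν := by
  have hγ : IsProbabilityMeasure γ := h.isProb
  have hPP : ∫⁻ xy, PP hp xy ∂γ = ∫⁻ su, γ ((fun xy : ℝ × ℝ => (xy, su)) ⁻¹' setP) ∂(rho hp) := by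
    rw [show ∫⁻ xy, PP hp xy ∂γ = (γ.prod (rho hp)) setP from
      (Measure.prod_apply measurableSet_setP).symm,
      Measure.prod_apply_symm measurableSet_setP]
  rw [← hPP, ← marginal_fst h hp, ← marginal_snd h hp, ← lintegral_add_left
    (by exact (measurable_phi hp).comp measurable_fst : Measurable fun z : ℝ × ℝ => ENNReal.ofReal (|z.1| ^ p))]
  exact lintegral_mono fun z => PP_le hp z.1 z.2

-- main comparison: if γ' dominates γ in upper-right probabilities, its cost is smaller
theorem cost_le_cost (hp : 1 ≤ p) {γ γ' : Measure (ℝ × ℝ)} {μ ν : Measure ℝ}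
    [IsProbabilityMeasure μ] [IsProbabilityMeasure ν]
    (h : IsCoupling γ μ ν) (h' : IsCoupling γ' μ ν)
    (hμ : (∫⁻ x, ENNReal.ofReal (|x| ^ p) ∂μ) < ⊤) (hν : (∫⁻ x, ENNReal.ofReal (|x| ^ p) ∂ν) < ⊤)
    (hG : ∀ s t : ℝ, γ (Ioi s ×ˢ Ioi t) ≤ γ' (Ioi s ×ˢ Ioi t)) :
    ∫⁻ z : ℝ × ℝ, ENNReal.ofReal (|z.1 - z.2| ^ p) ∂γ'
      ≤ ∫⁻ z : ℝ × ℝ, ENNReal.ofReal (|z.1 - z.2| ^ p) ∂γ := by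
  set C := (∫⁻ x, ENNReal.ofReal (|x| ^ p) ∂μ) + ∫⁻ x, ENNReal.ofReal (|x| ^ p) ∂ν with hC
  set Pγ := ∫⁻ su, γ ((fun xy : ℝ × ℝ => (xy, su)) ⁻¹' setP) ∂(rho hp)
  set Pγ' := ∫⁻ su, γ' ((fun xy : ℝ × ℝ => (xy, su)) ⁻¹' setP) ∂(rho hp)
  set Nγ := ∫⁻ su, γ ((fun xy : ℝ × ℝ => (xy, su)) ⁻¹' setN) ∂(rho hp)
  set Nγ' := ∫⁻ su, γ' ((fun xy : ℝ × ℝ => (xy, su)) ⁻¹' setN) ∂(rho hp)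
  have hPle : Pγ ≤ Pγ' := by
    apply lintegral_mono
    rintro ⟨s, u⟩
    dsimp only
    rw [setP_slice γ s u, setP_slice γ' s u]
    split_ifs with h1 h2 h3
    · exact hG _ _
    · exact le_rfl
    · exact compare_iic h h' hG _ _
    · exact le_rfl
  have hNle : Nγ' ≤ Nγ := by
    apply lintegral_mono
    rintro ⟨s, u⟩
    dsimp only
    rw [setN_slice γ s u, setN_slice γ' s u]
    split_ifs with h1 h2 h3
    · exact compare_mixed_fst h h' hG _ _
    · exact le_rfl
    · exact compare_mixed_snd h h' hG _ _
    · exact le_rfl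
  have hP'fin : Pγ' ≠ ⊤ := by
    have := PPint_le hp h'
    exact ne_top_of_le_ne_top (by
      rw [← hC]
      exact (ENNReal.add_lt_top.2 ⟨hμ, hν⟩).ne) this
  have e1 := integrated_identity hp h
  have e2 := integrated_identity hp h'
  rw [← hC] at e1 e2
  have chain : (∫⁻ z : ℝ × ℝ, ENNReal.ofReal (|z.1 - z.2| ^ p) ∂γ') + Pγ'
      ≤ (∫⁻ z : ℝ × ℝ, ENNReal.ofReal (|z.1 - z.2| ^ p) ∂γ) + Pγ' := by
    calc (∫⁻ z : ℝ × ℝ, ENNReal.ofReal (|z.1 - z.2| ^ p) ∂γ') + Pγ' = C + Nγ' := e2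
    _ ≤ C + Nγ := add_le_add_right hNle _
    _ = (∫⁻ z : ℝ × ℝ, ENNReal.ofReal (|z.1 - z.2| ^ p) ∂γ) + Pγ := e1.symm
    _ ≤ (∫⁻ z : ℝ × ℝ, ENNReal.ofReal (|z.1 - z.2| ^ p) ∂γ) + Pγ' := add_le_add_right hPle _
  exact ENNReal.le_of_add_le_add_right hP'fin chain

end MainIneq

section Star
variable {p : ℝ}

instance : IsProbabilityMeasure (volume.restrict (Ioo (0:ℝ) 1)) := by
  constructor
  rw [Measure.restrict_apply MeasurableSet.univ, univ_inter, Real.volume_Ioo]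
  norm_num

noncomputable def couplingStar (μ ν : Measure ℝ) : Measure (ℝ × ℝ) :=
  Measure.map (fun q => (quantileOf μ q, quantileOf ν q)) (volume.restrict (Ioo (0:ℝ) 1))

variable {μ ν : Measure ℝ} [IsProbabilityMeasure μ] [IsProbabilityMeasure ν]

lemma star_aemeasurable :
    AEMeasurable (fun q => (quantileOf μ q, quantileOf ν q)) (volume.restrict (Ioo (0:ℝ) 1)) :=
  (quantile_aemeasurable (μ := μ)).prodMk (quantile_aemeasurable (μ := ν))

lemma couplingStar_isCoupling : IsCoupling (couplingStar μ ν) μ ν := by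
  constructor
  · rw [couplingStar, AEMeasurable.map_map_of_aemeasurable
      measurable_fst.aemeasurable star_aemeasurable]
    exact map_quantile
  · rw [couplingStar, AEMeasurable.map_map_of_aemeasurable
      measurable_snd.aemeasurable star_aemeasurable]
    exact map_quantile

lemma couplingStar_cost (hp : 1 ≤ p) :
    ∫⁻ z : ℝ × ℝ, ENNReal.ofReal (|z.1 - z.2| ^ p) ∂(couplingStar μ ν)
      = ∫⁻ q in Ioo (0:ℝ) 1, ENNReal.ofReal (|quantileOf μ q - quantileOf ν q| ^ p) := by
  rw [couplingStar, lintegral_map' (measurable_cost hp).aemeasurable star_aemeasurable]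

lemma prob_Ioi_eq (κ : Measure ℝ) [IsProbabilityMeasure κ] (x : ℝ) :
    κ (Ioi x) = ENNReal.ofReal (1 - cdfOf κ x) := by
  have h1 : κ (Ioi x) = κ univ - κ (Iic x) := by
    rw [← compl_Iic]
    exact measure_compl measurableSet_Iic (measure_ne_top κ _)
  rw [h1, measure_univ, ← cdf_eq κ x, ENNReal.ofReal_sub _ (cdf_nonneg κ x), ENNReal.ofReal_one]

lemma couplingStar_rect (s t : ℝ) :
    couplingStar μ ν (Ioi s ×ˢ Ioi t) = min (μ (Ioi s)) (ν (Ioi t)) := by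
  set c := cdfOf μ s
  set d := cdfOf ν t
  have hc0 : 0 ≤ c := cdf_nonneg μ s
  have hc1 : c ≤ 1 := cdf_le_one μ s
  have hd0 : 0 ≤ d := cdf_nonneg ν t
  have hd1 : d ≤ 1 := cdf_le_one ν t
  rw [couplingStar, Measure.map_apply_of_aemeasurable star_aemeasurable
    (measurableSet_Ioi.prod measurableSet_Ioi), Measure.restrict_apply' measurableSet_Ioo]
  have hset : (fun q => (quantileOf μ q, quantileOf ν q)) ⁻¹' (Ioi s ×ˢ Ioi t) ∩ Ioo 0 1
      = Ioo (max c d) 1 := by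
    ext q
    simp only [mem_inter_iff, mem_preimage, mem_prod, mem_Ioi, mem_Ioo, lt_min_iff, max_lt_iff]
    constructor
    · rintro ⟨⟨h1, h2⟩, hq⟩
      exact ⟨⟨(lt_quantile_iff hq.1 hq.2).1 h1, (lt_quantile_iff hq.1 hq.2).1 h2⟩, hq.2⟩
    · rintro ⟨⟨h1, h2⟩, hq1⟩
      have hq0 : 0 < q := lt_of_le_of_lt (le_max_of_le_left hc0) (max_lt h1 h2)
      exact ⟨⟨(lt_quantile_iff hq0 hq1).2 h1, (lt_quantile_iff hq0 hq1).2 h2⟩, hq0, hq1⟩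
  rw [hset, Real.volume_Ioo, prob_Ioi_eq μ s, prob_Ioi_eq ν t]
  rcases le_total c d with hcd | hcd
  · rw [max_eq_right hcd, min_eq_right (ENNReal.ofReal_le_ofReal (by linarith))]
  · rw [max_eq_left hcd, min_eq_left (ENNReal.ofReal_le_ofReal (by linarith))]

lemma coupling_rect_le {γ : Measure (ℝ × ℝ)} (h : IsCoupling γ μ ν) (s t : ℝ) :
    γ (Ioi s ×ˢ Ioi t) ≤ couplingStar μ ν (Ioi s ×ˢ Ioi t) := by
  rw [couplingStar_rect]
  refine le_min ?_ ?_
  · rw [← coupling_fst h (Ioi s) measurableSet_Ioi]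
    exact measure_mono fun z hz => ⟨hz.1, mem_univ _⟩
  · rw [← coupling_snd h (Ioi t) measurableSet_Ioi]
    exact measure_mono fun z hz => ⟨mem_univ _, hz.2⟩

end Star

/-- One-dimensional Wasserstein distance: `W_p(μ,ν)^p` equals the `L^p` distance of the
quantile functions, `∫₀¹ |F_μ⁻¹(q) - F_ν⁻¹(q)|^p dq`. -/
theorem wasserstein_one_dim_quantile
    (p : ℝ) (hp : 1 ≤ p)
    (μ ν : Measure ℝ) [IsProbabilityMeasure μ] [IsProbabilityMeasure ν]
    (hμ : ∫⁻ x, ENNReal.ofReal (|x| ^ p) ∂μ < ⊤)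
    (hν : ∫⁻ x, ENNReal.ofReal (|x| ^ p) ∂ν < ⊤) :
    sInf {I : ℝ≥0∞ | ∃ γ : Measure (ℝ × ℝ), IsCoupling γ μ ν ∧
        I = ∫⁻ z, ENNReal.ofReal (|z.1 - z.2| ^ p) ∂γ}
      = ∫⁻ q in Ioo (0 : ℝ) 1,
          ENNReal.ofReal (|quantileOf μ q - quantileOf ν q| ^ p) := by
  apply le_antisymm
  · apply csInf_le (OrderBot.bddBelow _)
    exact ⟨couplingStar μ ν, couplingStar_isCoupling, (couplingStar_cost hp).symm⟩
  · apply le_sInf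
    rintro I ⟨γ, hγ, rfl⟩
    rw [← couplingStar_cost hp]
    exact cost_le_cost hp hγ couplingStar_isCoupling hμ hν (coupling_rect_le hγ)
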